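/- arXiv:2112.01990 — 2 statements merged into one kernel-verified Lean document; each statement's English description precedes it below -/
import Mathlib

section
/- Let H : {(x,t) ∈ ℝ² : x ≤ t} → ℝ be continuous and suppose there is a decreasing integrable function σ on [a,∞) with |H(x,t)| ≤ σ((x+t)/2) for a ≤ x ≤ t. Define F(x,t) = H(x,t) + ∫_t^∞ H(x,ξ) H(t,ξ) dξ for x ≤ t and F(x,t) = H(t,x) + ∫_x^∞ H(x,ξ) H(t,ξ) dξ for t ≤ x. Then F is symmetric and real-valued, and satisfies |F(x,t)| ≤ σ((x+t)/2) + σ((x+t)/2) · ∫_{(x+t)/2}^∞ σ(u) du · C for some constant C depending only on σ (in particular F is bounded by a function of (x+t)/2 that is decreasing and integrable at +∞). -/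
open MeasureTheory

private lemma indicator_shift (f : ℝ → ℝ) (c d : ℝ) :
    (Set.Ioi c).indicator (fun x => f (x + d)) =
      fun x => (Set.Ioi (c + d)).indicator f (x + d) := by
  ext x
  by_cases h : x ∈ Set.Ioi c
  · rw [Set.indicator_of_mem h, Set.indicator_of_mem]
    exact add_lt_add_left h d
  · rw [Set.indicator_of_notMem h, Set.indicator_of_notMem]
    simp only [Set.mem_Ioi, not_lt] at h ⊢
    exact add_le_add_left h d

private lemma integrableOn_Ioi_comp_add_right (f : ℝ → ℝ) (c d : ℝ)
    (hf : IntegrableOn f (Set.Ioi (c + d))) :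
    IntegrableOn (fun x => f (x + d)) (Set.Ioi c) := by
  rw [← integrable_indicator_iff measurableSet_Ioi, indicator_shift]
  exact ((integrable_indicator_iff measurableSet_Ioi).2 hf).comp_add_right d

private lemma integral_Ioi_comp_add_right (f : ℝ → ℝ) (c d : ℝ) :
    (∫ x in Set.Ioi c, f (x + d)) = ∫ x in Set.Ioi (c + d), f x := by
  rw [← integral_indicator measurableSet_Ioi, ← integral_indicator measurableSet_Ioi,
    indicator_shift]
  exact integral_add_right_eq_self ((Set.Ioi (c + d)).indicator f) d

private lemma key_bound
    (a : ℝ) (H : ℝ → ℝ → ℝ) (σ : ℝ → ℝ)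
    (hσ_anti : AntitoneOn σ (Set.Ici a))
    (hσ_int : IntegrableOn σ (Set.Ici a))
    (hH_cont : ContinuousOn (fun p : ℝ × ℝ => H p.1 p.2) {p : ℝ × ℝ | p.1 ≤ p.2})
    (hH_bound : ∀ x t, a ≤ x → x ≤ t → |H x t| ≤ σ ((x + t) / 2))
    (x t : ℝ) (hax : a ≤ x) (hxt : x ≤ t) :
    |H x t + ∫ ξ in Set.Ioi t, H x ξ * H t ξ| ≤
      σ ((x + t) / 2) + σ ((x + t) / 2) * (∫ u in Set.Ioi ((x + t) / 2), σ u) * 2 := by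
  set m := (x + t) / 2 with hm
  have hσ0 : ∀ s, a ≤ s → 0 ≤ σ s := by
    intro s hs
    have := hH_bound s s hs le_rfl
    have h2 : (s + s) / 2 = s := by ring
    rw [h2] at this
    exact le_trans (abs_nonneg _) this
  have hat : a ≤ t := le_trans hax hxt
  have hxm : x ≤ m := by rw [hm]; linarith
  have hmt : m ≤ t := by rw [hm]; linarith
  have ham : a ≤ m := le_trans hax hxm
  -- integrability of σ on various tails
  have hσm : IntegrableOn σ (Set.Ioi m) := hσ_int.mono_set (Set.Ioi_subset_Ici ham)
  have hσt : IntegrableOn σ (Set.Ioi t) := hσ_int.mono_set (Set.Ioi_subset_Ici hat)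
  -- integrability of ξ ↦ σ ((t + ξ)/2) on Ioi t
  have hg_int : IntegrableOn (fun ξ => σ ((t + ξ) / 2)) (Set.Ioi t) := by
    have h1 : IntegrableOn (fun y => σ (y + t / 2)) (Set.Ioi (t / 2)) := by
      apply integrableOn_Ioi_comp_add_right σ (t / 2) (t / 2)
      have : t / 2 + t / 2 = t := by ring
      rw [this]; exact hσt
    have h2 := (integrableOn_Ioi_comp_mul_right_iff (fun y => σ (y + t / 2)) t
      (a := (1 : ℝ) / 2) (by norm_num)).2 (by rwa [show t * (1 / 2) = t / 2 by ring])
    have : (fun ξ : ℝ => σ (ξ * (1 / 2) + t / 2)) = fun ξ => σ ((t + ξ) / 2) := by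
      funext ξ; congr 1; ring
    rwa [this] at h2
  -- value of the integral of σ ((t + ξ)/2)
  have hg_val : (∫ ξ in Set.Ioi t, σ ((t + ξ) / 2)) = 2 * ∫ u in Set.Ioi t, σ u := by
    have h2 := integral_comp_mul_right_Ioi (fun y => σ (y + t / 2)) t
      (b := (1 : ℝ) / 2) (by norm_num)
    have he : (fun ξ : ℝ => σ (ξ * (1 / 2) + t / 2)) = fun ξ => σ ((t + ξ) / 2) := by
      funext ξ; congr 1; ring
    calc (∫ ξ in Set.Ioi t, σ ((t + ξ) / 2))
        = ∫ ξ in Set.Ioi t, (fun y => σ (y + t / 2)) (ξ * (1 / 2)) := by rw [← he]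
      _ = ((1 : ℝ) / 2)⁻¹ • ∫ y in Set.Ioi (t * (1 / 2)), σ (y + t / 2) := h2
      _ = 2 * ∫ y in Set.Ioi (t / 2), σ (y + t / 2) := by
          norm_num [smul_eq_mul, mul_comm]
          rw [show t * (1/2 : ℝ) = t / 2 by ring]
      _ = 2 * ∫ u in Set.Ioi (t / 2 + t / 2), σ u := by
          rw [integral_Ioi_comp_add_right σ (t / 2) (t / 2)]
      _ = 2 * ∫ u in Set.Ioi t, σ u := by rw [show t / 2 + t / 2 = t by ring]
  -- pointwise bound for the integrand
  have hpt : ∀ ξ ∈ Set.Ioi t, ‖H x ξ * H t ξ‖ ≤ σ m * σ ((t + ξ) / 2) := by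
    intro ξ hξ
    have htξ : t ≤ ξ := le_of_lt hξ
    have hxξ : x ≤ ξ := le_trans hxt htξ
    have hb1 : |H x ξ| ≤ σ ((x + ξ) / 2) := hH_bound x ξ hax hxξ
    have hb2 : |H t ξ| ≤ σ ((t + ξ) / 2) := hH_bound t ξ hat htξ
    have hmem1 : m ∈ Set.Ici a := ham
    have hmem2 : (x + ξ) / 2 ∈ Set.Ici a := by
      simp only [Set.mem_Ici]; linarith
    have hσle : σ ((x + ξ) / 2) ≤ σ m := by
      apply hσ_anti hmem1 hmem2
      rw [hm]; linarith
    rw [Real.norm_eq_abs, abs_mul]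
    exact mul_le_mul (le_trans hb1 hσle) hb2 (abs_nonneg _)
      (hσ0 m ham)
  -- measurability of the integrand on Ioi t
  have hmeas : AEStronglyMeasurable (fun ξ => H x ξ * H t ξ)
      (volume.restrict (Set.Ioi t)) := by
    have hc : ∀ s : ℝ, ContinuousOn (fun ξ => H s ξ) (Set.Ici s) := by
      intro s
      have : ContinuousOn (fun ξ : ℝ => ((s, ξ) : ℝ × ℝ)) (Set.Ici s) :=
        (Continuous.prodMk_right s).continuousOn
      exact hH_cont.comp this (fun ξ hξ => hξ)
    have h1 : ContinuousOn (fun ξ => H x ξ * H t ξ) (Set.Ioi t) := by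
      apply ContinuousOn.mul
      · exact (hc x).mono fun ξ hξ => le_trans hxt (le_of_lt hξ)
      · exact (hc t).mono fun ξ hξ => (le_of_lt hξ : t ≤ ξ)
    exact h1.aestronglyMeasurable measurableSet_Ioi
  -- the dominating function is integrable
  have hG_int : IntegrableOn (fun ξ => σ m * σ ((t + ξ) / 2)) (Set.Ioi t) :=
    hg_int.const_mul (σ m)
  have hbd : ∀ᵐ ξ ∂(volume.restrict (Set.Ioi t)),
      ‖H x ξ * H t ξ‖ ≤ σ m * σ ((t + ξ) / 2) :=
    (ae_restrict_iff' measurableSet_Ioi).2 (Filter.Eventually.of_forall hpt)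
  -- bound the integral
  have hIbound : |∫ ξ in Set.Ioi t, H x ξ * H t ξ| ≤
      σ m * (∫ u in Set.Ioi m, σ u) * 2 := by
    have h1 : ‖∫ ξ in Set.Ioi t, H x ξ * H t ξ‖ ≤
        ∫ ξ in Set.Ioi t, σ m * σ ((t + ξ) / 2) :=
      norm_integral_le_of_norm_le hG_int hbd
    rw [Real.norm_eq_abs] at h1
    have h2 : (∫ ξ in Set.Ioi t, σ m * σ ((t + ξ) / 2)) =
        σ m * (2 * ∫ u in Set.Ioi t, σ u) := by
      rw [integral_const_mul, hg_val]
    have h3 : (∫ u in Set.Ioi t, σ u) ≤ ∫ u in Set.Ioi m, σ u := by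
      apply setIntegral_mono_set hσm
      · exact (ae_restrict_iff' measurableSet_Ioi).2
          (Filter.Eventually.of_forall fun u hu => hσ0 u (le_trans ham (le_of_lt hu)))
      · exact Filter.Eventually.of_forall (Set.Ioi_subset_Ioi hmt)
    calc |∫ ξ in Set.Ioi t, H x ξ * H t ξ|
        ≤ σ m * (2 * ∫ u in Set.Ioi t, σ u) := by rw [← h2]; exact h1
      _ ≤ σ m * (2 * ∫ u in Set.Ioi m, σ u) := by
          apply mul_le_mul_of_nonneg_left _ (hσ0 m ham)
          linarith
      _ = σ m * (∫ u in Set.Ioi m, σ u) * 2 := by ring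
  calc |H x t + ∫ ξ in Set.Ioi t, H x ξ * H t ξ|
      ≤ |H x t| + |∫ ξ in Set.Ioi t, H x ξ * H t ξ| := abs_add_le _ _
    _ ≤ σ m + σ m * (∫ u in Set.Ioi m, σ u) * 2 :=
        add_le_add (hH_bound x t hax hxt) hIbound

theorem F_symmetric_and_bounded
    (a : ℝ) (H : ℝ → ℝ → ℝ) (σ : ℝ → ℝ)
    (hσ_anti : AntitoneOn σ (Set.Ici a))
    (hσ_int : IntegrableOn σ (Set.Ici a))
    (hH_cont : ContinuousOn (fun p : ℝ × ℝ => H p.1 p.2) {p : ℝ × ℝ | p.1 ≤ p.2})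
    (hH_bound : ∀ x t, a ≤ x → x ≤ t → |H x t| ≤ σ ((x + t) / 2))
    (F : ℝ → ℝ → ℝ)
    (hF1 : ∀ x t, x ≤ t → F x t = H x t + ∫ ξ in Set.Ioi t, H x ξ * H t ξ)
    (hF2 : ∀ x t, t ≤ x → F x t = H t x + ∫ ξ in Set.Ioi x, H x ξ * H t ξ) :
    (∀ x t, F x t = F t x) ∧
      ∃ C : ℝ, 0 ≤ C ∧ ∀ x t, a ≤ x → a ≤ t →
        |F x t| ≤ σ ((x + t) / 2) +
          σ ((x + t) / 2) * (∫ u in Set.Ioi ((x + t) / 2), σ u) * C := by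
  have hsym : ∀ x t, F x t = F t x := by
    intro x t
    rcases le_total x t with h | h
    · rw [hF1 x t h, hF2 t x h]
      congr 1
      exact setIntegral_congr_fun measurableSet_Ioi fun ξ _ => mul_comm _ _
    · rw [hF2 x t h, hF1 t x h]
      congr 1
      exact setIntegral_congr_fun measurableSet_Ioi fun ξ _ => mul_comm _ _
  refine ⟨hsym, 2, by norm_num, ?_⟩
  intro x t hax hat
  rcases le_total x t with h | h
  · rw [hF1 x t h]
    exact key_bound a H σ hσ_anti hσ_int hH_cont hH_bound x t hax h
  · rw [hsym x t, hF1 t x h]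
    have := key_bound a H σ hσ_anti hσ_int hH_cont hH_bound t x hat h
    rwa [show t + x = x + t by ring] at this
end

section
/- Let λ ∈ ℂ with Im λ ≥ 0, λ ≠ 0, and let K : {(x,t) : x ≤ t} → ℝ be continuous with |K(x,t)| ≤ σ((x+t)/2) for a decreasing integrable function σ on ℝ with ∫_x^∞ σ integrable. Define y(x) = e^{iλx} + ∫_x^∞ e^{iλt} K(x,t) dt. Then y(x) = e^{iλx}(1 + o(1)) as x → ∞. -/
open MeasureTheory

lemma shift_setIntegral_aux (f : ℝ → ℝ) (a c : ℝ) :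
    ∫ t in Set.Ioi a, f (t + c) = ∫ t in Set.Ioi (a + c), f t := by
  have h1 : MeasurePreserving (fun t : ℝ => t + c) volume volume :=
    measurePreserving_add_right volume c
  have h2 : MeasurableEmbedding (fun t : ℝ => t + c) :=
    (Homeomorph.addRight c).isClosedEmbedding.measurableEmbedding
  have h := h1.setIntegral_preimage_emb h2 f (Set.Ioi (a + c))
  rwa [show (fun t : ℝ => t + c) ⁻¹' Set.Ioi (a + c) = Set.Ioi a by
    ext u; simp] at h

theorem jost_asymptotics_from_kernel
    (l : ℂ) (hl_im : 0 ≤ l.im) (hl : l ≠ 0)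
    (K : ℝ → ℝ → ℝ) (σ : ℝ → ℝ)
    (hσ_anti : Antitone σ)
    (hσ_int : ∀ a : ℝ, IntegrableOn σ (Set.Ioi a))
    (hσ1_int : ∀ a : ℝ, IntegrableOn (fun x => ∫ u in Set.Ioi x, σ u) (Set.Ioi a))
    (hK_cont : ContinuousOn (fun p : ℝ × ℝ => K p.1 p.2) {p : ℝ × ℝ | p.1 ≤ p.2})
    (hK_bound : ∀ x t, x ≤ t → |K x t| ≤ σ ((x + t) / 2))
    (y : ℝ → ℂ)
    (hy : ∀ x : ℝ, y x = Complex.exp (Complex.I * l * x) +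
      ∫ t in Set.Ioi x, Complex.exp (Complex.I * l * t) * (K x t : ℂ)) :
    Filter.Tendsto (fun x : ℝ => y x / Complex.exp (Complex.I * l * x))
      Filter.atTop (nhds 1) := by
  -- notation for the tail integral
  set g : ℝ → ℝ := fun x => ∫ u in Set.Ioi x, σ u with hgdef
  -- tail of an integrable function tends to 0
  have hg_tendsto : Filter.Tendsto g Filter.atTop (nhds 0) := by
    have h1 := intervalIntegral_tendsto_integral_Ioi 0 (hσ_int 0)
      (Filter.tendsto_id (α := ℝ))
    have key : ∀ x : ℝ, 0 ≤ x →
        g x = (∫ u in Set.Ioi (0:ℝ), σ u) - ∫ u in (0:ℝ)..x, σ u := by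
      intro x hx
      rw [intervalIntegral.integral_of_le hx]
      have hsplit : Set.Ioi (0:ℝ) = Set.Ioc 0 x ∪ Set.Ioi x :=
        (Set.Ioc_union_Ioi_eq_Ioi hx).symm
      have := setIntegral_union (f := σ) (μ := volume)
        (Set.Ioc_disjoint_Ioi (le_refl x)) measurableSet_Ioi
        ((hσ_int 0).mono_set Set.Ioc_subset_Ioi_self) (hσ_int x)
      rw [hgdef]
      simp only
      rw [hsplit, this]
      ring
    have h2 : Filter.Tendsto
        (fun x : ℝ => (∫ u in Set.Ioi (0:ℝ), σ u) - ∫ u in (0:ℝ)..x, σ u)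
        Filter.atTop (nhds ((∫ u in Set.Ioi (0:ℝ), σ u) - ∫ u in Set.Ioi (0:ℝ), σ u)) :=
      tendsto_const_nhds.sub h1
    rw [sub_self] at h2
    refine h2.congr' ?_
    filter_upwards [Filter.eventually_ge_atTop (0:ℝ)] with x hx
    exact (key x hx).symm
  -- integrability of the bound
  have hb_int : ∀ x : ℝ, IntegrableOn (fun t => σ ((x + t) / 2)) (Set.Ioi x) := by
    intro x
    have h2 : MeasurePreserving (fun t : ℝ => t + x / 2) volume volume :=
      measurePreserving_add_right volume _
    have h3 : MeasurableEmbedding (fun t : ℝ => t + x / 2) :=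
      (Homeomorph.addRight (x / 2)).isClosedEmbedding.measurableEmbedding
    have h1 : IntegrableOn (fun u : ℝ => σ (u + x / 2)) (Set.Ioi (x / 2)) := by
      have h := (h2.integrableOn_comp_preimage h3 (f := σ) (s := Set.Ioi x)).mpr (hσ_int x)
      have hpre : (fun t : ℝ => t + x / 2) ⁻¹' Set.Ioi x = Set.Ioi (x / 2) := by
        ext u
        simp only [Set.mem_preimage, Set.mem_Ioi]
        constructor <;> intro <;> linarith
      rwa [hpre] at h
    have h4 := (integrableOn_Ioi_comp_mul_left_iff (fun u : ℝ => σ (u + x / 2)) x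
      (a := (1:ℝ)/2) (by norm_num)).mpr (by
        have : (1:ℝ)/2 * x = x / 2 := by ring
        rwa [this])
    have heq : (fun t : ℝ => σ ((x + t) / 2)) =
        fun t : ℝ => σ ((1:ℝ)/2 * t + x / 2) := by
      funext t; congr 1; ring
    rw [heq]
    exact h4
  -- value of the bound integral
  have hb_eq : ∀ x : ℝ, (∫ t in Set.Ioi x, σ ((x + t) / 2)) = 2 * g x := by
    intro x
    have heq : (fun t : ℝ => σ ((x + t) / 2)) =
        fun t : ℝ => (fun u : ℝ => σ (u + x / 2)) ((1:ℝ)/2 * t) := by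
      funext t; simp only; congr 1; ring
    rw [heq, MeasureTheory.integral_comp_mul_left_Ioi (fun u : ℝ => σ (u + x / 2)) x
      (by norm_num : (0:ℝ) < 1/2)]
    rw [shift_setIntegral_aux σ ((1:ℝ)/2 * x) (x / 2)]
    have : (1:ℝ)/2 * x + x / 2 = x := by ring
    rw [this, smul_eq_mul, hgdef]
    norm_num
  -- main pointwise bound
  have hbound : ∀ x : ℝ,
      ‖y x / Complex.exp (Complex.I * l * x) - 1‖ ≤ 2 * g x := by
    intro x
    have hexp_ne : Complex.exp (Complex.I * l * x) ≠ 0 := Complex.exp_ne_zero _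
    rw [hy x, add_div, div_self hexp_ne, add_sub_cancel_left, div_eq_mul_inv,
      ← integral_mul_const]
    rw [← hb_eq x]
    refine norm_integral_le_of_norm_le (hb_int x) ?_
    filter_upwards [ae_restrict_mem measurableSet_Ioi] with t ht
    have hxt : x ≤ t := le_of_lt ht
    have hre : ∀ s : ℝ, (Complex.I * l * (s:ℂ)).re = -l.im * s := by
      intro s
      simp [Complex.mul_re, Complex.mul_im]
    have hn1 : ‖Complex.exp (Complex.I * l * (t:ℂ))‖ = Real.exp (-l.im * t) := by
      rw [Complex.norm_exp, hre]
    have hn2 : ‖Complex.exp (Complex.I * l * (x:ℂ))‖ = Real.exp (-l.im * x) := by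
      rw [Complex.norm_exp, hre]
    rw [norm_mul, norm_mul, norm_inv, hn1, hn2, Complex.norm_real, Real.norm_eq_abs]
    have hKb := hK_bound x t hxt
    have habs : (0:ℝ) ≤ |K x t| := abs_nonneg _
    have hratio : Real.exp (-l.im * t) * (Real.exp (-l.im * x))⁻¹ ≤ 1 := by
      rw [← Real.exp_neg, ← Real.exp_add]
      apply Real.exp_le_one_iff.mpr
      nlinarith [mul_nonneg hl_im (sub_nonneg.mpr hxt)]
    calc Real.exp (-l.im * t) * |K x t| * (Real.exp (-l.im * x))⁻¹
        = |K x t| * (Real.exp (-l.im * t) * (Real.exp (-l.im * x))⁻¹) := by ring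
      _ ≤ |K x t| * 1 := by
          exact mul_le_mul_of_nonneg_left hratio habs
      _ = |K x t| := mul_one _
      _ ≤ σ ((x + t) / 2) := hKb
  -- conclude
  have h2g : Filter.Tendsto (fun x => 2 * g x) Filter.atTop (nhds 0) := by
    simpa using hg_tendsto.const_mul 2
  have h0 : Filter.Tendsto
      (fun x : ℝ => y x / Complex.exp (Complex.I * l * x) - 1)
      Filter.atTop (nhds 0) := squeeze_zero_norm hbound h2g
  have := h0.add (tendsto_const_nhds (x := (1:ℂ)) (f := Filter.atTop (α := ℝ)))
  simpa using this
end
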